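/- The anyonic generators attached to non-adjacent simple roots commute (quantum Serre relation in the case ã_{αβ} = 0): for all α, β ∈ {1, …, M+N−1} with |α − β| ≥ 2 (so a_{αβ} = 0), E_α^+ E_β^+ = E_β^+ E_α^+ and E_α^− E_β^− = E_β^− E_α^−. -/

import Mathlib

/-!
Anyonic realization of `U_q(A(M−1,N−1))` on the mixed Fock space of `M` fermionic
and `N` (`q`-deformed) bosonic colours on a one-dimensional lattice `Fin L`.
-/

noncomputable section

/-- Configurations: fermionic occupations (Bool) and bosonic occupations (ℕ). -/
abbrev Cfg (M N L : ℕ) : Type := ((Fin M × Fin L) → Bool) × ((Fin N × Fin L) → ℕ)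

/-- The mixed Fock space. -/
abbrev FS (M N L : ℕ) : Type := Cfg M N L →₀ ℂ

/-- The `q`-integer `[x]_q = (q^x − q^{−x})/(q − q⁻¹)`. -/
def qInt (q : ℂ) (x : ℤ) : ℂ := (q ^ x - q ^ (-x)) / (q - q⁻¹)

/-- Lexicographic order on the fermionic modes `(i, r)`. -/
def lexLt {M L : ℕ} (x y : Fin M × Fin L) : Prop :=
  x.1 < y.1 ∨ (x.1 = y.1 ∧ x.2 < y.2)

instance {M L : ℕ} (x y : Fin M × Fin L) : Decidable (lexLt x y) := by
  unfold lexLt; infer_instance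

/-- The Jordan–Wigner sign `(−1)^{#{(j,t) < (i,r) : f(j,t) = true}}`. -/
def fSgn {M L : ℕ} (f : (Fin M × Fin L) → Bool) (i : Fin M) (r : Fin L) : ℂ :=
  (-1 : ℂ) ^ (Finset.univ.filter fun jt : Fin M × Fin L => lexLt jt (i, r) ∧ f jt = true).card

/-- The fermionic annihilation operator `c_i(r)`. -/
def cA (M N L : ℕ) (i : Fin M) (r : Fin L) : Module.End ℂ (FS M N L) :=
  Finsupp.lift (FS M N L) ℂ (Cfg M N L) fun x =>
    if x.1 (i, r) = true then
      fSgn x.1 i r • Finsupp.single (Function.update x.1 (i, r) false, x.2) (1 : ℂ)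
    else 0

/-- The fermionic creation operator `c_i†(r)`. -/
def cC (M N L : ℕ) (i : Fin M) (r : Fin L) : Module.End ℂ (FS M N L) :=
  Finsupp.lift (FS M N L) ℂ (Cfg M N L) fun x =>
    if x.1 (i, r) = false then
      fSgn x.1 i r • Finsupp.single (Function.update x.1 (i, r) true, x.2) (1 : ℂ)
    else 0

/-- The fermionic number operator `n_i(r)`. -/
def nF (M N L : ℕ) (i : Fin M) (r : Fin L) : Module.End ℂ (FS M N L) :=
  Finsupp.lift (FS M N L) ℂ (Cfg M N L) fun x =>
    (if x.1 (i, r) = true then (1 : ℂ) else 0) • Finsupp.single x (1 : ℂ)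

/-- The `q`-deformed bosonic annihilation operator `b_k(r)`. -/
def bA (M N L : ℕ) (s : ℤ → ℂ) (k : Fin N) (r : Fin L) : Module.End ℂ (FS M N L) :=
  Finsupp.lift (FS M N L) ℂ (Cfg M N L) fun x =>
    if x.2 (k, r) = 0 then 0
    else s (x.2 (k, r)) •
      Finsupp.single (x.1, Function.update x.2 (k, r) (x.2 (k, r) - 1)) (1 : ℂ)

/-- The `q`-deformed bosonic creation operator `b_k†(r)`. -/
def bC (M N L : ℕ) (s : ℤ → ℂ) (k : Fin N) (r : Fin L) : Module.End ℂ (FS M N L) :=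
  Finsupp.lift (FS M N L) ℂ (Cfg M N L) fun x =>
    s ((x.2 (k, r) : ℤ) + 1) •
      Finsupp.single (x.1, Function.update x.2 (k, r) (x.2 (k, r) + 1)) (1 : ℂ)

/-- The bosonic number operator `n'_k(r)`. -/
def nB (M N L : ℕ) (k : Fin N) (r : Fin L) : Module.End ℂ (FS M N L) :=
  Finsupp.lift (FS M N L) ℂ (Cfg M N L) fun x =>
    ((x.2 (k, r) : ℂ)) • Finsupp.single x (1 : ℂ)

/-- The fermionic disorder exponent `Σ_t ε(t−r) f(i,t)`. -/
def fEx {M N L : ℕ} (i : Fin M) (r : Fin L) (x : Cfg M N L) : ℤ :=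
  ∑ t : Fin L, Int.sign (((t : ℕ) : ℤ) - ((r : ℕ) : ℤ)) * (if x.1 (i, t) = true then 1 else 0)

/-- The bosonic disorder exponent `Σ_t ε(t−r) g(k,t)`. -/
def gEx {M N L : ℕ} (k : Fin N) (r : Fin L) (x : Cfg M N L) : ℤ :=
  ∑ t : Fin L, Int.sign (((t : ℕ) : ℤ) - ((r : ℕ) : ℤ)) * (x.2 (k, t) : ℤ)

/-- The fermionic disorder operator `F_i^σ(r) : |f,g⟩ ↦ p^{σ·Σ_t ε(t−r) f(i,t)}|f,g⟩`. -/
def Fdis (M N L : ℕ) (p : ℂ) (σ : ℤ) (i : Fin M) (r : Fin L) : Module.End ℂ (FS M N L) :=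
  Finsupp.lift (FS M N L) ℂ (Cfg M N L) fun x =>
    (p ^ (σ * fEx i r x)) • Finsupp.single x (1 : ℂ)

/-- The bosonic disorder operator `G_k^σ(r) : |f,g⟩ ↦ p^{σ·Σ_t ε(t−r) g(k,t)}|f,g⟩`. -/
def Gdis (M N L : ℕ) (p : ℂ) (σ : ℤ) (k : Fin N) (r : Fin L) : Module.End ℂ (FS M N L) :=
  Finsupp.lift (FS M N L) ℂ (Cfg M N L) fun x =>
    (p ^ (σ * gEx k r x)) • Finsupp.single x (1 : ℂ)

/-- The fermionic anyon `a_i(r) = F_i^−(r) ∘ c_i(r)`. -/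
def aAny (M N L : ℕ) (p : ℂ) (i : Fin M) (r : Fin L) : Module.End ℂ (FS M N L) :=
  Fdis M N L p (-1) i r * cA M N L i r

/-- The fermionic anyon `a_i†(r) = F_i^+(r) ∘ c_i†(r)`. -/
def aDag (M N L : ℕ) (p : ℂ) (i : Fin M) (r : Fin L) : Module.End ℂ (FS M N L) :=
  Fdis M N L p 1 i r * cC M N L i r

/-- The fermionic anyon `ã_i(r) = F_i^+(r) ∘ c_i(r)`. -/
def taAny (M N L : ℕ) (p : ℂ) (i : Fin M) (r : Fin L) : Module.End ℂ (FS M N L) :=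
  Fdis M N L p 1 i r * cA M N L i r

/-- The fermionic anyon `ã_i†(r) = F_i^−(r) ∘ c_i†(r)`. -/
def taDag (M N L : ℕ) (p : ℂ) (i : Fin M) (r : Fin L) : Module.End ℂ (FS M N L) :=
  Fdis M N L p (-1) i r * cC M N L i r

/-- The bosonic anyon `A_k(r) = G_k^+(r) ∘ b_k(r)`. -/
def AAny (M N L : ℕ) (p : ℂ) (s : ℤ → ℂ) (k : Fin N) (r : Fin L) : Module.End ℂ (FS M N L) :=
  Gdis M N L p 1 k r * bA M N L s k r

/-- The bosonic anyon `A_k†(r) = G_k^−(r) ∘ b_k†(r)`. -/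
def ADag (M N L : ℕ) (p : ℂ) (s : ℤ → ℂ) (k : Fin N) (r : Fin L) : Module.End ℂ (FS M N L) :=
  Gdis M N L p (-1) k r * bC M N L s k r

/-- The bosonic anyon `Ã_k(r) = G_k^−(r) ∘ b_k(r)`. -/
def tAAny (M N L : ℕ) (p : ℂ) (s : ℤ → ℂ) (k : Fin N) (r : Fin L) : Module.End ℂ (FS M N L) :=
  Gdis M N L p (-1) k r * bA M N L s k r

/-- The bosonic anyon `Ã_k†(r) = G_k^+(r) ∘ b_k†(r)`. -/
def tADag (M N L : ℕ) (p : ℂ) (s : ℤ → ℂ) (k : Fin N) (r : Fin L) : Module.End ℂ (FS M N L) :=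
  Gdis M N L p 1 k r * bC M N L s k r

/-- The Cartan generator `H_α` (labels `α = 1, …, M+N−1`). -/
def Hg (M N L : ℕ) (α : ℕ) : Module.End ℂ (FS M N L) :=
  if h : 1 ≤ α ∧ α < M then
    ∑ r : Fin L, (nF M N L ⟨α - 1, by omega⟩ r - nF M N L ⟨α, by omega⟩ r)
  else if h : α = M ∧ 1 ≤ M ∧ 1 ≤ N then
    ∑ r : Fin L, (nF M N L ⟨M - 1, by omega⟩ r + nB M N L ⟨0, by omega⟩ r)
  else if h : M < α ∧ α ≤ M + N - 1 then
    ∑ r : Fin L, (nB M N L ⟨α - M - 1, by omega⟩ r - nB M N L ⟨α - M, by omega⟩ r)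
  else 0

/-- The raising generator `E_α^+` (labels `α = 1, …, M+N−1`). -/
def Ep (M N L : ℕ) (p : ℂ) (s : ℤ → ℂ) (α : ℕ) : Module.End ℂ (FS M N L) :=
  if h : 1 ≤ α ∧ α < M then
    ∑ r : Fin L, aDag M N L p ⟨α - 1, by omega⟩ r * aAny M N L p ⟨α, by omega⟩ r
  else if h : α = M ∧ 1 ≤ M ∧ 1 ≤ N then
    ∑ r : Fin L, aDag M N L p ⟨M - 1, by omega⟩ r * AAny M N L p s ⟨0, by omega⟩ r
  else if h : M < α ∧ α ≤ M + N - 1 then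
    ∑ r : Fin L, ADag M N L p s ⟨α - M - 1, by omega⟩ r * AAny M N L p s ⟨α - M, by omega⟩ r
  else 0

/-- The lowering generator `E_α^−` (labels `α = 1, …, M+N−1`). -/
def Em (M N L : ℕ) (p : ℂ) (s : ℤ → ℂ) (α : ℕ) : Module.End ℂ (FS M N L) :=
  if h : 1 ≤ α ∧ α < M then
    ∑ r : Fin L, taDag M N L p ⟨α, by omega⟩ r * taAny M N L p ⟨α - 1, by omega⟩ r
  else if h : α = M ∧ 1 ≤ M ∧ 1 ≤ N then
    ∑ r : Fin L, tADag M N L p s ⟨0, by omega⟩ r * taAny M N L p ⟨M - 1, by omega⟩ r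
  else if h : M < α ∧ α ≤ M + N - 1 then
    ∑ r : Fin L, tADag M N L p s ⟨α - M, by omega⟩ r * tAAny M N L p s ⟨α - M - 1, by omega⟩ r
  else 0

lemma lift_single {M N L : ℕ} (F : Cfg M N L → FS M N L) (x : Cfg M N L) :
    (Finsupp.lift (FS M N L) ℂ (Cfg M N L) F) (Finsupp.single x 1) = F x := by
  simp [Finsupp.lift_apply, Finsupp.sum_single_index]

variable {M N L : ℕ}

lemma cA_single (i : Fin M) (r : Fin L) (x : Cfg M N L) :
    cA M N L i r (Finsupp.single x 1) =
      (if x.1 (i, r) = true then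
        fSgn x.1 i r • Finsupp.single (Function.update x.1 (i, r) false, x.2) (1 : ℂ)
      else 0) := lift_single _ _

lemma cC_single (i : Fin M) (r : Fin L) (x : Cfg M N L) :
    cC M N L i r (Finsupp.single x 1) =
      (if x.1 (i, r) = false then
        fSgn x.1 i r • Finsupp.single (Function.update x.1 (i, r) true, x.2) (1 : ℂ)
      else 0) := lift_single _ _

lemma bA_single (s : ℤ → ℂ) (k : Fin N) (r : Fin L) (x : Cfg M N L) :
    bA M N L s k r (Finsupp.single x 1) =
      (if x.2 (k, r) = 0 then 0
      else s (x.2 (k, r)) •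
        Finsupp.single (x.1, Function.update x.2 (k, r) (x.2 (k, r) - 1)) (1 : ℂ)) := lift_single _ _

lemma bC_single (s : ℤ → ℂ) (k : Fin N) (r : Fin L) (x : Cfg M N L) :
    bC M N L s k r (Finsupp.single x 1) =
      s ((x.2 (k, r) : ℤ) + 1) •
        Finsupp.single (x.1, Function.update x.2 (k, r) (x.2 (k, r) + 1)) (1 : ℂ) := lift_single _ _

lemma Fdis_single (p : ℂ) (σ : ℤ) (i : Fin M) (r : Fin L) (x : Cfg M N L) :
    Fdis M N L p σ i r (Finsupp.single x 1) =
      (p ^ (σ * fEx i r x)) • Finsupp.single x (1 : ℂ) := lift_single _ _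

lemma Gdis_single (p : ℂ) (σ : ℤ) (k : Fin N) (r : Fin L) (x : Cfg M N L) :
    Gdis M N L p σ k r (Finsupp.single x 1) =
      (p ^ (σ * gEx k r x)) • Finsupp.single x (1 : ℂ) := lift_single _ _

lemma fSgn_congr {M L : ℕ} {f f' : (Fin M × Fin L) → Bool} {i : Fin M} {r : Fin L}
    (h : ∀ m, lexLt m (i, r) → f m = f' m) : fSgn f i r = fSgn f' i r := by
  unfold fSgn
  congr 2
  apply Finset.filter_congr
  intro m _
  constructor
  · rintro ⟨h1, h2⟩; exact ⟨h1, (h m h1).symm.trans h2⟩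
  · rintro ⟨h1, h2⟩; exact ⟨h1, (h m h1).trans h2⟩

lemma fSgn_flip2 {M L : ℕ} {f : (Fin M × Fin L) → Bool} {m1 m2 : Fin M × Fin L} {i : Fin M} {r : Fin L}
    (h1 : f m1 = true) (h2 : f m2 = false) (hl1 : lexLt m1 (i, r)) (hl2 : lexLt m2 (i, r)) :
    fSgn (Function.update (Function.update f m1 false) m2 true) i r = fSgn f i r := by
  have hne : m1 ≠ m2 := by rintro rfl; rw [h1] at h2; exact Bool.true_eq_false.mp h2
  unfold fSgn
  congr 1
  set f' := Function.update (Function.update f m1 false) m2 true with hf'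
  have hS' : (Finset.univ.filter fun jt => lexLt jt (i, r) ∧ f' jt = true)
      = insert m2 ((Finset.univ.filter fun jt => lexLt jt (i, r) ∧ f jt = true).erase m1) := by
    ext m
    simp only [Finset.mem_insert, Finset.mem_erase, Finset.mem_filter, Finset.mem_univ, true_and]
    by_cases hm2 : m = m2
    · subst hm2
      simp [hf', Function.update_self, hl2]
    · by_cases hm1 : m = m1
      · subst hm1
        simp [hf', Function.update_of_ne hne.symm, Function.update_of_ne, hm2, Function.update_self]
      · simp [hf', Function.update_of_ne hm2, Function.update_of_ne hm1, hm1, hm2]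
  have hm1S : m1 ∈ Finset.univ.filter fun jt => lexLt jt (i, r) ∧ f jt = true := by
    simp [Finset.mem_filter, hl1, h1]
  have hm2S : m2 ∉ (Finset.univ.filter fun jt => lexLt jt (i, r) ∧ f jt = true).erase m1 := by
    simp [Finset.mem_erase, Finset.mem_filter, h2]
  rw [hS', Finset.card_insert_of_notMem hm2S, Finset.card_erase_of_mem hm1S]
  have : 0 < (Finset.univ.filter fun jt => lexLt jt (i, r) ∧ f jt = true).card :=
    Finset.card_pos.mpr ⟨m1, hm1S⟩
  omega

lemma fEx_congr {M N L : ℕ} {i : Fin M} {r : Fin L} {x y : Cfg M N L}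
    (h : ∀ t, t ≠ r → x.1 (i, t) = y.1 (i, t)) : fEx i r x = fEx i r y := by
  unfold fEx
  apply Finset.sum_congr rfl
  intro t _
  by_cases ht : t = r
  · subst ht; simp
  · rw [h t ht]

lemma gEx_congr {M N L : ℕ} {k : Fin N} {r : Fin L} {x y : Cfg M N L}
    (h : ∀ t, t ≠ r → x.2 (k, t) = y.2 (k, t)) : gEx k r x = gEx k r y := by
  unfold gEx
  apply Finset.sum_congr rfl
  intro t _
  by_cases ht : t = r
  · subst ht; simp
  · rw [h t ht]

/-- Coefficient of the fermionic-pair composite. -/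
def cF (p : ℂ) (σ1 σ2 : ℤ) (i i' : Fin M) (r : Fin L) (x : Cfg M N L) : ℂ :=
  if x.1 (i, r) = false ∧ x.1 (i', r) = true then
    (p ^ (σ1 * fEx i r x) * p ^ (σ2 * fEx i' r x)) *
      (fSgn x.1 i' r * fSgn (Function.update x.1 (i', r) false) i r)
  else 0

def phiF (i i' : Fin M) (r : Fin L) (x : Cfg M N L) : Cfg M N L :=
  (Function.update (Function.update x.1 (i', r) false) (i, r) true, x.2)

lemma shapeF (p : ℂ) (σ1 σ2 : ℤ) (i i' : Fin M) (hii : i ≠ i') (r : Fin L) (x : Cfg M N L) :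
    ((Fdis M N L p σ1 i r * cC M N L i r) * (Fdis M N L p σ2 i' r * cA M N L i' r))
      (Finsupp.single x 1)
    = cF p σ1 σ2 i i' r x • Finsupp.single (phiF i i' r x) 1 := by
  rcases x with ⟨f, g⟩
  have hne : ((i, r) : Fin M × Fin L) ≠ (i', r) := by simp [hii]
  by_cases h2 : f (i', r) = true
  · by_cases h1 : f (i, r) = false
    · have e2 : fEx i' r ((Function.update f (i', r) false, g) : Cfg M N L) = fEx i' r (f, g) := by
        refine fEx_congr ?_
        intro t ht
        show Function.update f (i', r) false (i', t) = f (i', t)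
        rw [Function.update_of_ne (by simp [Prod.ext_iff, ht])]
      have e1 : fEx i r
          ((Function.update (Function.update f (i', r) false) (i, r) true, g) : Cfg M N L)
          = fEx i r (f, g) := by
        refine fEx_congr ?_
        intro t ht
        show Function.update (Function.update f (i', r) false) (i, r) true (i, t) = f (i, t)
        rw [Function.update_of_ne (by simp [Prod.ext_iff, ht]),
          Function.update_of_ne (by simp [Prod.ext_iff, hii])]
      simp only [Module.End.mul_apply, cA_single, h2, if_true, map_smul, Fdis_single,
        cC_single, Function.update_of_ne hne, h1, smul_smul, e1, e2]
      rw [cF, if_pos ⟨h1, h2⟩]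
      show _ = (_ : ℂ) • Finsupp.single
        ((Function.update (Function.update f (i', r) false) (i, r) true, g) : Cfg M N L) (1 : ℂ)
      simp only [if_pos rfl]
      congr 1
      ring
    · simp only [Module.End.mul_apply, cA_single, h2, if_true, map_smul, Fdis_single,
        cC_single, Function.update_of_ne hne, h1, if_false, smul_zero, map_zero, cF]
      rw [if_neg (by tauto)]
      simp
  · simp only [Module.End.mul_apply, cA_single, h2, if_false, map_zero, cF]
    rw [if_neg (by tauto)]
    simp

/-- Coefficient of the bosonic-pair composite. -/
def cB (p : ℂ) (s : ℤ → ℂ) (σ1 σ2 : ℤ) (k k' : Fin N) (r : Fin L) (x : Cfg M N L) : ℂ :=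
  if x.2 (k', r) = 0 then 0
  else (p ^ (σ1 * gEx k r x) * p ^ (σ2 * gEx k' r x)) *
    (s (x.2 (k', r)) * s ((x.2 (k, r) : ℤ) + 1))

def phiB (k k' : Fin N) (r : Fin L) (x : Cfg M N L) : Cfg M N L :=
  (x.1, Function.update (Function.update x.2 (k', r) (x.2 (k', r) - 1)) (k, r) (x.2 (k, r) + 1))

lemma shapeB (p : ℂ) (s : ℤ → ℂ) (σ1 σ2 : ℤ) (k k' : Fin N) (hkk : k ≠ k') (r : Fin L)
    (x : Cfg M N L) :
    ((Gdis M N L p σ1 k r * bC M N L s k r) * (Gdis M N L p σ2 k' r * bA M N L s k' r))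
      (Finsupp.single x 1)
    = cB p s σ1 σ2 k k' r x • Finsupp.single (phiB k k' r x) 1 := by
  rcases x with ⟨f, g⟩
  have hne : ((k, r) : Fin N × Fin L) ≠ (k', r) := by simp [hkk]
  by_cases h2 : g (k', r) = 0
  · simp only [Module.End.mul_apply, bA_single, h2, if_true, map_zero, cB]
    simp
  · have e2 : gEx k' r ((f, Function.update g (k', r) (g (k', r) - 1)) : Cfg M N L)
        = gEx k' r (f, g) := by
      refine gEx_congr ?_
      intro t ht
      show Function.update g (k', r) (g (k', r) - 1) (k', t) = g (k', t)
      rw [Function.update_of_ne (by simp [Prod.ext_iff, ht])]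
    have e1 : ∀ v w, gEx k r ((f, Function.update (Function.update g (k', r) w) (k, r) v)
        : Cfg M N L) = gEx k r (f, g) := by
      intro v w
      refine gEx_congr ?_
      intro t ht
      show Function.update (Function.update g (k', r) w) (k, r) v (k, t) = g (k, t)
      rw [Function.update_of_ne (by simp [Prod.ext_iff, ht]),
        Function.update_of_ne (by simp [Prod.ext_iff, hkk])]
    simp only [Module.End.mul_apply, bA_single, h2, if_false, map_smul, Gdis_single,
      bC_single, smul_smul, e1, e2, Function.update_of_ne hne]
    rw [cB, if_neg h2]
    show _ = (_ : ℂ) • Finsupp.single ((f, Function.update (Function.update g (k', r)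
      (g (k', r) - 1)) (k, r) (g (k, r) + 1)) : Cfg M N L) (1 : ℂ)
    congr 1
    ring

/-- Coefficient of the mixed composite with fermionic creation. -/
def cX1 (p : ℂ) (s : ℤ → ℂ) (σ1 σ2 : ℤ) (i : Fin M) (k : Fin N) (r : Fin L) (x : Cfg M N L) : ℂ :=
  if x.1 (i, r) = false ∧ ¬ x.2 (k, r) = 0 then
    (p ^ (σ1 * fEx i r x) * p ^ (σ2 * gEx k r x)) * (s (x.2 (k, r)) * fSgn x.1 i r)
  else 0

def phiX1 (i : Fin M) (k : Fin N) (r : Fin L) (x : Cfg M N L) : Cfg M N L :=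
  (Function.update x.1 (i, r) true, Function.update x.2 (k, r) (x.2 (k, r) - 1))

lemma shapeX1 (p : ℂ) (s : ℤ → ℂ) (σ1 σ2 : ℤ) (i : Fin M) (k : Fin N) (r : Fin L)
    (x : Cfg M N L) :
    ((Fdis M N L p σ1 i r * cC M N L i r) * (Gdis M N L p σ2 k r * bA M N L s k r))
      (Finsupp.single x 1)
    = cX1 p s σ1 σ2 i k r x • Finsupp.single (phiX1 i k r x) 1 := by
  rcases x with ⟨f, g⟩
  by_cases h2 : g (k, r) = 0
  · simp only [Module.End.mul_apply, bA_single, h2, if_true, map_zero, cX1]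
    simp
  · by_cases h1 : f (i, r) = false
    · have e2 : gEx k r ((f, Function.update g (k, r) (g (k, r) - 1)) : Cfg M N L)
          = gEx k r (f, g) := by
        refine gEx_congr ?_
        intro t ht
        show Function.update g (k, r) (g (k, r) - 1) (k, t) = g (k, t)
        rw [Function.update_of_ne (by simp [Prod.ext_iff, ht])]
      have e1 : fEx i r ((Function.update f (i, r) true,
            Function.update g (k, r) (g (k, r) - 1)) : Cfg M N L) = fEx i r (f, g) := by
        refine fEx_congr ?_
        intro t ht
        show Function.update f (i, r) true (i, t) = f (i, t)
        rw [Function.update_of_ne (by simp [Prod.ext_iff, ht])]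
      simp only [Module.End.mul_apply, bA_single, h2, if_false, map_smul, Gdis_single,
        cC_single, Fdis_single, h1, if_true, smul_smul, e1, e2]
      rw [cX1, if_pos ⟨h1, h2⟩]
      show _ = (_ : ℂ) • Finsupp.single ((Function.update f (i, r) true,
        Function.update g (k, r) (g (k, r) - 1)) : Cfg M N L) (1 : ℂ)
      congr 1
      ring
    · simp only [Module.End.mul_apply, bA_single, h2, if_false, map_smul, Gdis_single,
        cC_single, h1, smul_smul, cX1]
      rw [if_neg (by tauto)]
      simp [if_neg h1]

/-- Coefficient of the mixed composite with fermionic annihilation. -/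
def cX2 (p : ℂ) (s : ℤ → ℂ) (σ1 σ2 : ℤ) (k : Fin N) (i : Fin M) (r : Fin L) (x : Cfg M N L) : ℂ :=
  if x.1 (i, r) = true then
    (p ^ (σ1 * gEx k r x) * p ^ (σ2 * fEx i r x)) * (s ((x.2 (k, r) : ℤ) + 1) * fSgn x.1 i r)
  else 0

def phiX2 (k : Fin N) (i : Fin M) (r : Fin L) (x : Cfg M N L) : Cfg M N L :=
  (Function.update x.1 (i, r) false, Function.update x.2 (k, r) (x.2 (k, r) + 1))

lemma shapeX2 (p : ℂ) (s : ℤ → ℂ) (σ1 σ2 : ℤ) (k : Fin N) (i : Fin M) (r : Fin L)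
    (x : Cfg M N L) :
    ((Gdis M N L p σ1 k r * bC M N L s k r) * (Fdis M N L p σ2 i r * cA M N L i r))
      (Finsupp.single x 1)
    = cX2 p s σ1 σ2 k i r x • Finsupp.single (phiX2 k i r x) 1 := by
  rcases x with ⟨f, g⟩
  by_cases h1 : f (i, r) = true
  · have e2 : fEx i r ((Function.update f (i, r) false, g) : Cfg M N L) = fEx i r (f, g) := by
      refine fEx_congr ?_
      intro t ht
      show Function.update f (i, r) false (i, t) = f (i, t)
      rw [Function.update_of_ne (by simp [Prod.ext_iff, ht])]
    have e1 : gEx k r ((Function.update f (i, r) false,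
          Function.update g (k, r) (g (k, r) + 1)) : Cfg M N L) = gEx k r (f, g) := by
      refine gEx_congr ?_
      intro t ht
      show Function.update g (k, r) (g (k, r) + 1) (k, t) = g (k, t)
      rw [Function.update_of_ne (by simp [Prod.ext_iff, ht])]
    simp only [Module.End.mul_apply, cA_single, h1, if_true, map_smul, Fdis_single,
      bC_single, Gdis_single, smul_smul, e1, e2]
    rw [cX2, if_pos h1]
    show _ = (_ : ℂ) • Finsupp.single ((Function.update f (i, r) false,
      Function.update g (k, r) (g (k, r) + 1)) : Cfg M N L) (1 : ℂ)
    congr 1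
    ring
  · simp only [Module.End.mul_apply, cA_single, h1, if_false, map_zero, cX2]
    simp [h1]

lemma end_ext (T U : Module.End ℂ (FS M N L))
    (h : ∀ x, T (Finsupp.single x 1) = U (Finsupp.single x 1)) : T = U := by
  apply Finsupp.lhom_ext'
  intro x
  apply LinearMap.ext_ring
  simpa using h x

lemma commute_of_single (T U : Module.End ℂ (FS M N L)) (cT cU : Cfg M N L → ℂ)
    (φT φU : Cfg M N L → Cfg M N L)
    (hT : ∀ x, T (Finsupp.single x 1) = cT x • Finsupp.single (φT x) 1)
    (hU : ∀ x, U (Finsupp.single x 1) = cU x • Finsupp.single (φU x) 1)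
    (h1 : ∀ x, cU x ≠ 0 → cT (φU x) = cT x)
    (h2 : ∀ x, cT x ≠ 0 → cU (φT x) = cU x)
    (h3 : ∀ x, cT x ≠ 0 → cU x ≠ 0 → φT (φU x) = φU (φT x)) :
    T * U = U * T := by
  apply end_ext
  intro x
  rw [Module.End.mul_apply, Module.End.mul_apply, hT, hU, map_smul, map_smul, hT, hU,
    smul_smul, smul_smul]
  by_cases hcT : cT x = 0
  · by_cases hcU : cU x = 0
    · simp [hcT, hcU]
    · rw [h1 x hcU, hcT]
      simp
  · by_cases hcU : cU x = 0
    · rw [h2 x hcT, hcU]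
      simp
    · rw [h1 x hcU, h2 x hcT, h3 x hcT hcU, mul_comm]

lemma lexLt_fst_le {m : Fin M × Fin L} {i : Fin M} {r : Fin L} (h : lexLt m (i, r)) :
    m.1 ≤ i := by
  rcases h with h | ⟨h, _⟩
  · exact le_of_lt h
  · exact le_of_eq h

lemma lexLt_of_fst_lt {m : Fin M × Fin L} {i : Fin M} {r : Fin L} (h : m.1 < i) :
    lexLt m (i, r) := Or.inl h

/-- `cF` only depends on the rows `≤ i` and `≤ i'`. -/
lemma cF_congr (p : ℂ) (σ1 σ2 : ℤ) (i i' : Fin M) (r : Fin L) (x x' : Cfg M N L)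
    (h : ∀ m : Fin M × Fin L, (m.1 ≤ i ∨ m.1 ≤ i') → x'.1 m = x.1 m) :
    cF p σ1 σ2 i i' r x' = cF p σ1 σ2 i i' r x := by
  have hv1 : x'.1 (i, r) = x.1 (i, r) := h _ (Or.inl le_rfl)
  have hv2 : x'.1 (i', r) = x.1 (i', r) := h _ (Or.inr le_rfl)
  have he1 : fEx i r x' = fEx i r x := fEx_congr (fun t _ => h (i, t) (Or.inl le_rfl))
  have he2 : fEx i' r x' = fEx i' r x := fEx_congr (fun t _ => h (i', t) (Or.inr le_rfl))
  have hs1 : fSgn x'.1 i' r = fSgn x.1 i' r :=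
    fSgn_congr (fun m hm => h m (Or.inr (lexLt_fst_le hm)))
  have hs2 : fSgn (Function.update x'.1 (i', r) false) i r
      = fSgn (Function.update x.1 (i', r) false) i r := by
    refine fSgn_congr (fun m hm => ?_)
    by_cases hmi : m = (i', r)
    · subst hmi; simp
    · rw [Function.update_of_ne hmi, Function.update_of_ne hmi]
      exact h m (Or.inl (lexLt_fst_le hm))
  unfold cF
  rw [hv1, hv2, he1, he2, hs1, hs2]

/-- `cF` is invariant under a balanced flip strictly below both rows. -/
lemma cF_flip2 (p : ℂ) (σ1 σ2 : ℤ) (i i' : Fin M) (r : Fin L) (x : Cfg M N L)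
    (a b : Fin M × Fin L) (g' : (Fin N × Fin L) → ℕ)
    (hai : a.1 < i) (hai' : a.1 < i') (hbi : b.1 < i) (hbi' : b.1 < i')
    (hfa : x.1 a = true) (hfb : x.1 b = false) :
    cF p σ1 σ2 i i' r ((Function.update (Function.update x.1 a false) b true, g') : Cfg M N L)
      = cF p σ1 σ2 i i' r x := by
  have hane : ∀ t, ((i, t) : Fin M × Fin L) ≠ a := by
    intro t hcon; rw [← hcon] at hai; exact lt_irrefl _ hai
  have hbne : ∀ t, ((i, t) : Fin M × Fin L) ≠ b := by
    intro t hcon; rw [← hcon] at hbi; exact lt_irrefl _ hbi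
  have hane' : ∀ t, ((i', t) : Fin M × Fin L) ≠ a := by
    intro t hcon; rw [← hcon] at hai'; exact lt_irrefl _ hai'
  have hbne' : ∀ t, ((i', t) : Fin M × Fin L) ≠ b := by
    intro t hcon; rw [← hcon] at hbi'; exact lt_irrefl _ hbi'
  have hv1 : (Function.update (Function.update x.1 a false) b true) (i, r) = x.1 (i, r) := by
    rw [Function.update_of_ne (hbne r), Function.update_of_ne (hane r)]
  have hv2 : (Function.update (Function.update x.1 a false) b true) (i', r) = x.1 (i', r) := by
    rw [Function.update_of_ne (hbne' r), Function.update_of_ne (hane' r)]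
  have he1 : fEx i r ((Function.update (Function.update x.1 a false) b true, g') : Cfg M N L)
      = fEx i r x := by
    refine fEx_congr (fun t _ => ?_)
    show (Function.update (Function.update x.1 a false) b true) (i, t) = x.1 (i, t)
    rw [Function.update_of_ne (hbne t), Function.update_of_ne (hane t)]
  have he2 : fEx i' r ((Function.update (Function.update x.1 a false) b true, g') : Cfg M N L)
      = fEx i' r x := by
    refine fEx_congr (fun t _ => ?_)
    show (Function.update (Function.update x.1 a false) b true) (i', t) = x.1 (i', t)
    rw [Function.update_of_ne (hbne' t), Function.update_of_ne (hane' t)]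
  have hs1 : fSgn (Function.update (Function.update x.1 a false) b true) i' r
      = fSgn x.1 i' r :=
    fSgn_flip2 hfa hfb (lexLt_of_fst_lt hai') (lexLt_of_fst_lt hbi')
  have hs2 : fSgn (Function.update (Function.update (Function.update x.1 a false) b true)
        (i', r) false) i r = fSgn (Function.update x.1 (i', r) false) i r := by
    rw [Function.update_comm (fun hcon : b = (i', r) => hbne' r hcon.symm),
      Function.update_comm (fun hcon : a = (i', r) => hane' r hcon.symm)]
    exact fSgn_flip2 (by rw [Function.update_of_ne (Ne.symm (hane' r))]; exact hfa)
      (by rw [Function.update_of_ne (Ne.symm (hbne' r))]; exact hfb)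
      (lexLt_of_fst_lt hai) (lexLt_of_fst_lt hbi)
  unfold cF
  dsimp only
  simp only [hv1, hv2, he1, he2, hs1, hs2]

/-- `cB` only depends on the bosonic rows `k` and `k'`. -/
lemma cB_congr (p : ℂ) (s : ℤ → ℂ) (σ1 σ2 : ℤ) (k k' : Fin N) (r : Fin L) (x x' : Cfg M N L)
    (h : ∀ t, x'.2 (k, t) = x.2 (k, t)) (h' : ∀ t, x'.2 (k', t) = x.2 (k', t)) :
    cB p s σ1 σ2 k k' r x' = cB p s σ1 σ2 k k' r x := by
  have he1 : gEx k r x' = gEx k r x := gEx_congr (fun t _ => h t)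
  have he2 : gEx k' r x' = gEx k' r x := gEx_congr (fun t _ => h' t)
  unfold cB
  rw [h r, h' r, he1, he2]

/-- `cX1` invariance: fermionic part only depends on rows `≤ i` (up to balanced flips),
bosonic part only on row `k`. -/
lemma cX1_congr (p : ℂ) (s : ℤ → ℂ) (σ1 σ2 : ℤ) (i : Fin M) (k : Fin N) (r : Fin L)
    (x x' : Cfg M N L)
    (hrow : ∀ t, x'.1 (i, t) = x.1 (i, t))
    (hsgn : fSgn x'.1 i r = fSgn x.1 i r)
    (hg : ∀ t, x'.2 (k, t) = x.2 (k, t)) :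
    cX1 p s σ1 σ2 i k r x' = cX1 p s σ1 σ2 i k r x := by
  have he1 : fEx i r x' = fEx i r x := fEx_congr (fun t _ => hrow t)
  have he2 : gEx k r x' = gEx k r x := gEx_congr (fun t _ => hg t)
  unfold cX1
  rw [hrow r, hg r, he1, he2, hsgn]

lemma cX2_congr (p : ℂ) (s : ℤ → ℂ) (σ1 σ2 : ℤ) (k : Fin N) (i : Fin M) (r : Fin L)
    (x x' : Cfg M N L)
    (hrow : ∀ t, x'.1 (i, t) = x.1 (i, t))
    (hsgn : fSgn x'.1 i r = fSgn x.1 i r)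
    (hg : ∀ t, x'.2 (k, t) = x.2 (k, t)) :
    cX2 p s σ1 σ2 k i r x' = cX2 p s σ1 σ2 k i r x := by
  have he1 : fEx i r x' = fEx i r x := fEx_congr (fun t _ => hrow t)
  have he2 : gEx k r x' = gEx k r x := gEx_congr (fun t _ => hg t)
  unfold cX2
  rw [hrow r, hg r, he1, he2, hsgn]

lemma update4_swap {α β : Type*} [DecidableEq α] (f : α → β) (a b c d : α)
    (x y z w : β) (hca : c ≠ a) (hcb : c ≠ b) (hda : d ≠ a) (hdb : d ≠ b) :
    Function.update (Function.update (Function.update (Function.update f a x) b y) c z) d w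
    = Function.update (Function.update (Function.update (Function.update f c z) d w) a x) b y := by
  funext m
  simp only [Function.update_apply]
  split_ifs <;> simp_all

lemma commFF (p : ℂ) (σ1 σ2 τ1 τ2 : ℤ) (i i' j j' : Fin M) (r r' : Fin L)
    (hii : i ≠ i') (hjj : j ≠ j')
    (hij : i < j) (hij' : i < j') (hi'j : i' < j) (hi'j' : i' < j') :
    ((Fdis M N L p σ1 i r * cC M N L i r) * (Fdis M N L p σ2 i' r * cA M N L i' r)) *
      ((Fdis M N L p τ1 j r' * cC M N L j r') * (Fdis M N L p τ2 j' r' * cA M N L j' r'))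
    = ((Fdis M N L p τ1 j r' * cC M N L j r') * (Fdis M N L p τ2 j' r' * cA M N L j' r')) *
      ((Fdis M N L p σ1 i r * cC M N L i r) * (Fdis M N L p σ2 i' r * cA M N L i' r)) := by
  apply commute_of_single _ _ (cF p σ1 σ2 i i' r) (cF p τ1 τ2 j j' r')
    (phiF i i' r) (phiF j j' r') (shapeF p σ1 σ2 i i' hii r) (shapeF p τ1 τ2 j j' hjj r')
  · intro x _
    refine cF_congr p σ1 σ2 i i' r x _ (fun m hm => ?_)
    have hm1 : m ≠ (j, r') := by
      rintro rfl
      rcases hm with h | h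
      · exact absurd h (not_le.mpr hij)
      · exact absurd h (not_le.mpr hi'j)
    have hm2 : m ≠ (j', r') := by
      rintro rfl
      rcases hm with h | h
      · exact absurd h (not_le.mpr hij')
      · exact absurd h (not_le.mpr hi'j')
    show Function.update (Function.update x.1 (j', r') false) (j, r') true m = x.1 m
    rw [Function.update_of_ne hm1, Function.update_of_ne hm2]
  · intro x hx
    have hcond : x.1 (i, r) = false ∧ x.1 (i', r) = true := by
      by_contra hc
      exact hx (by unfold cF; rw [if_neg hc])
    show cF p τ1 τ2 j j' r'
      ((Function.update (Function.update x.1 (i', r) false) (i, r) true, x.2) : Cfg M N L)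
      = cF p τ1 τ2 j j' r' x
    exact cF_flip2 p τ1 τ2 j j' r' x (i', r) (i, r) x.2 hi'j hi'j' hij hij'
      hcond.2 hcond.1
  · intro x _ _
    show ((Function.update (Function.update
        (Function.update (Function.update x.1 (j', r') false) (j, r') true) (i', r) false)
        (i, r) true, x.2) : Cfg M N L)
      = (Function.update (Function.update
        (Function.update (Function.update x.1 (i', r) false) (i, r) true) (j', r') false)
        (j, r') true, x.2)
    refine Prod.ext ?_ rfl
    exact update4_swap x.1 (j', r') (j, r') (i', r) (i, r) false true false true
      (by simp [Prod.ext_iff]; intro h; exact absurd h (ne_of_lt hi'j'))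
      (by simp [Prod.ext_iff]; intro h; exact absurd h (ne_of_lt hi'j))
      (by simp [Prod.ext_iff]; intro h; exact absurd h (ne_of_lt hij'))
      (by simp [Prod.ext_iff]; intro h; exact absurd h (ne_of_lt hij))

lemma update3_swap {α β : Type*} [DecidableEq α] (f : α → β) (a b c : α)
    (x y z : β) (hba : b ≠ a) (hca : c ≠ a) :
    Function.update (Function.update (Function.update f a x) b y) c z
    = Function.update (Function.update (Function.update f b y) c z) a x := by
  funext m
  simp only [Function.update_apply]
  split_ifs <;> simp_all

lemma commFB (p : ℂ) (s : ℤ → ℂ) (σ1 σ2 τ1 τ2 : ℤ) (i i' : Fin M) (k k' : Fin N)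
    (r r' : Fin L) (hii : i ≠ i') (hkk : k ≠ k') :
    ((Fdis M N L p σ1 i r * cC M N L i r) * (Fdis M N L p σ2 i' r * cA M N L i' r)) *
      ((Gdis M N L p τ1 k r' * bC M N L s k r') * (Gdis M N L p τ2 k' r' * bA M N L s k' r'))
    = ((Gdis M N L p τ1 k r' * bC M N L s k r') * (Gdis M N L p τ2 k' r' * bA M N L s k' r')) *
      ((Fdis M N L p σ1 i r * cC M N L i r) * (Fdis M N L p σ2 i' r * cA M N L i' r)) := by
  apply commute_of_single _ _ (cF p σ1 σ2 i i' r) (cB p s τ1 τ2 k k' r')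
    (phiF i i' r) (phiB k k' r') (shapeF p σ1 σ2 i i' hii r) (shapeB p s τ1 τ2 k k' hkk r')
  · intro x _
    exact cF_congr p σ1 σ2 i i' r x _ (fun m _ => rfl)
  · intro x _
    exact cB_congr p s τ1 τ2 k k' r' x _ (fun t => rfl) (fun t => rfl)
  · intro x _ _
    rfl

lemma commBB (p : ℂ) (s : ℤ → ℂ) (σ1 σ2 τ1 τ2 : ℤ) (k k' l l' : Fin N) (r r' : Fin L)
    (hkk : k ≠ k') (hll : l ≠ l')
    (hkl : k ≠ l) (hkl' : k ≠ l') (hk'l : k' ≠ l) (hk'l' : k' ≠ l') :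
    ((Gdis M N L p σ1 k r * bC M N L s k r) * (Gdis M N L p σ2 k' r * bA M N L s k' r)) *
      ((Gdis M N L p τ1 l r' * bC M N L s l r') * (Gdis M N L p τ2 l' r' * bA M N L s l' r'))
    = ((Gdis M N L p τ1 l r' * bC M N L s l r') * (Gdis M N L p τ2 l' r' * bA M N L s l' r')) *
      ((Gdis M N L p σ1 k r * bC M N L s k r) * (Gdis M N L p σ2 k' r * bA M N L s k' r)) := by
  have d1 : ((k', r) : Fin N × Fin L) ≠ (l', r') := by simp [Prod.ext_iff]; intro h; exact absurd h hk'l'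
  have d2 : ((k', r) : Fin N × Fin L) ≠ (l, r') := by simp [Prod.ext_iff]; intro h; exact absurd h hk'l
  have d3 : ((k, r) : Fin N × Fin L) ≠ (l', r') := by simp [Prod.ext_iff]; intro h; exact absurd h hkl'
  have d4 : ((k, r) : Fin N × Fin L) ≠ (l, r') := by simp [Prod.ext_iff]; intro h; exact absurd h hkl
  apply commute_of_single _ _ (cB p s σ1 σ2 k k' r) (cB p s τ1 τ2 l l' r')
    (phiB k k' r) (phiB l l' r') (shapeB p s σ1 σ2 k k' hkk r) (shapeB p s τ1 τ2 l l' hll r')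
  · intro x _
    refine cB_congr p s σ1 σ2 k k' r x _ (fun t => ?_) (fun t => ?_)
    · show Function.update (Function.update x.2 (l', r') _) (l, r') _ (k, t) = x.2 (k, t)
      rw [Function.update_of_ne (by simp [Prod.ext_iff]; intro h; exact absurd h hkl),
        Function.update_of_ne (by simp [Prod.ext_iff]; intro h; exact absurd h hkl')]
    · show Function.update (Function.update x.2 (l', r') _) (l, r') _ (k', t) = x.2 (k', t)
      rw [Function.update_of_ne (by simp [Prod.ext_iff]; intro h; exact absurd h hk'l),
        Function.update_of_ne (by simp [Prod.ext_iff]; intro h; exact absurd h hk'l')]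
  · intro x _
    refine cB_congr p s τ1 τ2 l l' r' x _ (fun t => ?_) (fun t => ?_)
    · show Function.update (Function.update x.2 (k', r) _) (k, r) _ (l, t) = x.2 (l, t)
      rw [Function.update_of_ne (by simp [Prod.ext_iff]; intro h; exact absurd h hkl.symm),
        Function.update_of_ne (by simp [Prod.ext_iff]; intro h; exact absurd h hk'l.symm)]
    · show Function.update (Function.update x.2 (k', r) _) (k, r) _ (l', t) = x.2 (l', t)
      rw [Function.update_of_ne (by simp [Prod.ext_iff]; intro h; exact absurd h hkl'.symm),
        Function.update_of_ne (by simp [Prod.ext_iff]; intro h; exact absurd h hk'l'.symm)]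
  · intro x _ _
    unfold phiB
    dsimp only
    refine Prod.ext rfl ?_
    dsimp only
    rw [Function.update_of_ne d2, Function.update_of_ne d1,
      Function.update_of_ne d4, Function.update_of_ne d3,
      Function.update_of_ne d3.symm, Function.update_of_ne d1.symm,
      Function.update_of_ne d4.symm, Function.update_of_ne d2.symm]
    exact update4_swap x.2 (l', r') (l, r') (k', r) (k, r) _ _ _ _ d1 d2 d3 d4

lemma commFX1 (p : ℂ) (s : ℤ → ℂ) (σ1 σ2 τ1 τ2 : ℤ) (i i' j : Fin M) (k : Fin N)
    (r r' : Fin L) (hii : i ≠ i') (hij : i < j) (hi'j : i' < j) :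
    ((Fdis M N L p σ1 i r * cC M N L i r) * (Fdis M N L p σ2 i' r * cA M N L i' r)) *
      ((Fdis M N L p τ1 j r' * cC M N L j r') * (Gdis M N L p τ2 k r' * bA M N L s k r'))
    = ((Fdis M N L p τ1 j r' * cC M N L j r') * (Gdis M N L p τ2 k r' * bA M N L s k r')) *
      ((Fdis M N L p σ1 i r * cC M N L i r) * (Fdis M N L p σ2 i' r * cA M N L i' r)) := by
  have dij : ((i, r) : Fin M × Fin L) ≠ (j, r') := by
    simp [Prod.ext_iff]; intro h; exact absurd h (ne_of_lt hij)
  have di'j : ((i', r) : Fin M × Fin L) ≠ (j, r') := by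
    simp [Prod.ext_iff]; intro h; exact absurd h (ne_of_lt hi'j)
  apply commute_of_single _ _ (cF p σ1 σ2 i i' r) (cX1 p s τ1 τ2 j k r')
    (phiF i i' r) (phiX1 j k r') (shapeF p σ1 σ2 i i' hii r) (shapeX1 p s τ1 τ2 j k r')
  · intro x _
    refine cF_congr p σ1 σ2 i i' r x _ (fun m hm => ?_)
    have hm1 : m ≠ (j, r') := by
      rintro rfl
      rcases hm with h | h
      · exact absurd h (not_le.mpr hij)
      · exact absurd h (not_le.mpr hi'j)
    exact Function.update_of_ne hm1 _ _
  · intro x hx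
    have hcond : x.1 (i, r) = false ∧ x.1 (i', r) = true := by
      by_contra hc
      exact hx (by unfold cF; rw [if_neg hc])
    refine cX1_congr p s τ1 τ2 j k r' x _ (fun t => ?_) ?_ (fun t => rfl)
    · show Function.update (Function.update x.1 (i', r) false) (i, r) true (j, t) = x.1 (j, t)
      rw [Function.update_of_ne (by simp [Prod.ext_iff]; intro h; exact absurd h (ne_of_lt hij).symm),
        Function.update_of_ne (by simp [Prod.ext_iff]; intro h; exact absurd h (ne_of_lt hi'j).symm)]
    · exact fSgn_flip2 hcond.2 hcond.1 (lexLt_of_fst_lt hi'j) (lexLt_of_fst_lt hij)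
  · intro x _ _
    refine Prod.ext ?_ rfl
    show Function.update (Function.update (Function.update x.1 (j, r') true) (i', r) false)
        (i, r) true
      = Function.update (Function.update (Function.update x.1 (i', r) false) (i, r) true)
        (j, r') true
    exact update3_swap x.1 (j, r') (i', r) (i, r) true false true di'j dij

lemma commFX2 (p : ℂ) (s : ℤ → ℂ) (σ1 σ2 τ1 τ2 : ℤ) (i i' j : Fin M) (k : Fin N)
    (r r' : Fin L) (hii : i ≠ i') (hij : i < j) (hi'j : i' < j) :
    ((Fdis M N L p σ1 i r * cC M N L i r) * (Fdis M N L p σ2 i' r * cA M N L i' r)) *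
      ((Gdis M N L p τ1 k r' * bC M N L s k r') * (Fdis M N L p τ2 j r' * cA M N L j r'))
    = ((Gdis M N L p τ1 k r' * bC M N L s k r') * (Fdis M N L p τ2 j r' * cA M N L j r')) *
      ((Fdis M N L p σ1 i r * cC M N L i r) * (Fdis M N L p σ2 i' r * cA M N L i' r)) := by
  have dij : ((i, r) : Fin M × Fin L) ≠ (j, r') := by
    simp [Prod.ext_iff]; intro h; exact absurd h (ne_of_lt hij)
  have di'j : ((i', r) : Fin M × Fin L) ≠ (j, r') := by
    simp [Prod.ext_iff]; intro h; exact absurd h (ne_of_lt hi'j)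
  apply commute_of_single _ _ (cF p σ1 σ2 i i' r) (cX2 p s τ1 τ2 k j r')
    (phiF i i' r) (phiX2 k j r') (shapeF p σ1 σ2 i i' hii r) (shapeX2 p s τ1 τ2 k j r')
  · intro x _
    refine cF_congr p σ1 σ2 i i' r x _ (fun m hm => ?_)
    have hm1 : m ≠ (j, r') := by
      rintro rfl
      rcases hm with h | h
      · exact absurd h (not_le.mpr hij)
      · exact absurd h (not_le.mpr hi'j)
    exact Function.update_of_ne hm1 _ _
  · intro x hx
    have hcond : x.1 (i, r) = false ∧ x.1 (i', r) = true := by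
      by_contra hc
      exact hx (by unfold cF; rw [if_neg hc])
    refine cX2_congr p s τ1 τ2 k j r' x _ (fun t => ?_) ?_ (fun t => rfl)
    · show Function.update (Function.update x.1 (i', r) false) (i, r) true (j, t) = x.1 (j, t)
      rw [Function.update_of_ne (by simp [Prod.ext_iff]; intro h; exact absurd h (ne_of_lt hij).symm),
        Function.update_of_ne (by simp [Prod.ext_iff]; intro h; exact absurd h (ne_of_lt hi'j).symm)]
    · exact fSgn_flip2 hcond.2 hcond.1 (lexLt_of_fst_lt hi'j) (lexLt_of_fst_lt hij)
  · intro x _ _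
    refine Prod.ext ?_ rfl
    show Function.update (Function.update (Function.update x.1 (j, r') false) (i', r) false)
        (i, r) true
      = Function.update (Function.update (Function.update x.1 (i', r) false) (i, r) true)
        (j, r') false
    exact update3_swap x.1 (j, r') (i', r) (i, r) false false true di'j dij

lemma commX1B (p : ℂ) (s : ℤ → ℂ) (σ1 σ2 τ1 τ2 : ℤ) (j : Fin M) (k0 l l' : Fin N)
    (r r' : Fin L) (hll : l ≠ l') (hk0l : k0 ≠ l) (hk0l' : k0 ≠ l') :
    ((Fdis M N L p σ1 j r * cC M N L j r) * (Gdis M N L p σ2 k0 r * bA M N L s k0 r)) *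
      ((Gdis M N L p τ1 l r' * bC M N L s l r') * (Gdis M N L p τ2 l' r' * bA M N L s l' r'))
    = ((Gdis M N L p τ1 l r' * bC M N L s l r') * (Gdis M N L p τ2 l' r' * bA M N L s l' r')) *
      ((Fdis M N L p σ1 j r * cC M N L j r) * (Gdis M N L p σ2 k0 r * bA M N L s k0 r)) := by
  have d1 : ((k0, r) : Fin N × Fin L) ≠ (l, r') := by
    simp [Prod.ext_iff]; intro h; exact absurd h hk0l
  have d2 : ((k0, r) : Fin N × Fin L) ≠ (l', r') := by
    simp [Prod.ext_iff]; intro h; exact absurd h hk0l'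
  apply commute_of_single _ _ (cX1 p s σ1 σ2 j k0 r) (cB p s τ1 τ2 l l' r')
    (phiX1 j k0 r) (phiB l l' r') (shapeX1 p s σ1 σ2 j k0 r) (shapeB p s τ1 τ2 l l' hll r')
  · intro x _
    refine cX1_congr p s σ1 σ2 j k0 r x _ (fun t => rfl) rfl (fun t => ?_)
    show Function.update (Function.update x.2 (l', r') _) (l, r') _ (k0, t) = x.2 (k0, t)
    rw [Function.update_of_ne (by simp [Prod.ext_iff]; intro h; exact absurd h hk0l),
      Function.update_of_ne (by simp [Prod.ext_iff]; intro h; exact absurd h hk0l')]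
  · intro x _
    refine cB_congr p s τ1 τ2 l l' r' x _ (fun t => ?_) (fun t => ?_)
    · show Function.update x.2 (k0, r) _ (l, t) = x.2 (l, t)
      rw [Function.update_of_ne (by simp [Prod.ext_iff]; intro h; exact absurd h hk0l.symm)]
    · show Function.update x.2 (k0, r) _ (l', t) = x.2 (l', t)
      rw [Function.update_of_ne (by simp [Prod.ext_iff]; intro h; exact absurd h hk0l'.symm)]
  · intro x _ _
    refine Prod.ext rfl ?_
    show Function.update (Function.update (Function.update x.2 (l', r') (x.2 (l', r') - 1))
        (l, r') (x.2 (l, r') + 1)) (k0, r)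
        (Function.update (Function.update x.2 (l', r') (x.2 (l', r') - 1))
          (l, r') (x.2 (l, r') + 1) (k0, r) - 1)
      = Function.update (Function.update (Function.update x.2 (k0, r) (x.2 (k0, r) - 1))
          (l', r') (Function.update x.2 (k0, r) (x.2 (k0, r) - 1) (l', r') - 1)) (l, r')
          (Function.update x.2 (k0, r) (x.2 (k0, r) - 1) (l, r') + 1)
    rw [Function.update_of_ne d1, Function.update_of_ne d2,
      Function.update_of_ne d2.symm, Function.update_of_ne d1.symm,
      Function.update_comm d1.symm, Function.update_comm d2.symm]

lemma commX2B (p : ℂ) (s : ℤ → ℂ) (σ1 σ2 τ1 τ2 : ℤ) (j : Fin M) (k0 l l' : Fin N)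
    (r r' : Fin L) (hll : l ≠ l') (hk0l : k0 ≠ l) (hk0l' : k0 ≠ l') :
    ((Gdis M N L p σ1 k0 r * bC M N L s k0 r) * (Fdis M N L p σ2 j r * cA M N L j r)) *
      ((Gdis M N L p τ1 l r' * bC M N L s l r') * (Gdis M N L p τ2 l' r' * bA M N L s l' r'))
    = ((Gdis M N L p τ1 l r' * bC M N L s l r') * (Gdis M N L p τ2 l' r' * bA M N L s l' r')) *
      ((Gdis M N L p σ1 k0 r * bC M N L s k0 r) * (Fdis M N L p σ2 j r * cA M N L j r)) := by
  have d1 : ((k0, r) : Fin N × Fin L) ≠ (l, r') := by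
    simp [Prod.ext_iff]; intro h; exact absurd h hk0l
  have d2 : ((k0, r) : Fin N × Fin L) ≠ (l', r') := by
    simp [Prod.ext_iff]; intro h; exact absurd h hk0l'
  apply commute_of_single _ _ (cX2 p s σ1 σ2 k0 j r) (cB p s τ1 τ2 l l' r')
    (phiX2 k0 j r) (phiB l l' r') (shapeX2 p s σ1 σ2 k0 j r) (shapeB p s τ1 τ2 l l' hll r')
  · intro x _
    refine cX2_congr p s σ1 σ2 k0 j r x _ (fun t => rfl) rfl (fun t => ?_)
    show Function.update (Function.update x.2 (l', r') _) (l, r') _ (k0, t) = x.2 (k0, t)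
    rw [Function.update_of_ne (by simp [Prod.ext_iff]; intro h; exact absurd h hk0l),
      Function.update_of_ne (by simp [Prod.ext_iff]; intro h; exact absurd h hk0l')]
  · intro x _
    refine cB_congr p s τ1 τ2 l l' r' x _ (fun t => ?_) (fun t => ?_)
    · show Function.update x.2 (k0, r) _ (l, t) = x.2 (l, t)
      rw [Function.update_of_ne (by simp [Prod.ext_iff]; intro h; exact absurd h hk0l.symm)]
    · show Function.update x.2 (k0, r) _ (l', t) = x.2 (l', t)
      rw [Function.update_of_ne (by simp [Prod.ext_iff]; intro h; exact absurd h hk0l'.symm)]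
  · intro x _ _
    refine Prod.ext rfl ?_
    show Function.update (Function.update (Function.update x.2 (l', r') (x.2 (l', r') - 1))
        (l, r') (x.2 (l, r') + 1)) (k0, r)
        (Function.update (Function.update x.2 (l', r') (x.2 (l', r') - 1))
          (l, r') (x.2 (l, r') + 1) (k0, r) + 1)
      = Function.update (Function.update (Function.update x.2 (k0, r) (x.2 (k0, r) + 1))
          (l', r') (Function.update x.2 (k0, r) (x.2 (k0, r) + 1) (l', r') - 1)) (l, r')
          (Function.update x.2 (k0, r) (x.2 (k0, r) + 1) (l, r') + 1)
    rw [Function.update_of_ne d1, Function.update_of_ne d2,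
      Function.update_of_ne d2.symm, Function.update_of_ne d1.symm,
      Function.update_comm d1.symm, Function.update_comm d2.symm]

lemma sum_mul_sum_comm {R : Type*} [Ring R] {ι : Type*} (s t : Finset ι) (f g : ι → R)
    (h : ∀ i j, f i * g j = g j * f i) :
    (∑ i ∈ s, f i) * (∑ j ∈ t, g j) = (∑ j ∈ t, g j) * (∑ i ∈ s, f i) := by
  rw [Finset.sum_mul_sum, Finset.sum_mul_sum]
  conv_rhs => rw [Finset.sum_comm]
  exact Finset.sum_congr rfl fun i _ => Finset.sum_congr rfl fun j _ => h i j


lemma Ep_low (p : ℂ) (s : ℤ → ℂ) {α : ℕ} (h1 : 1 ≤ α) (h2 : α < M) :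
    Ep M N L p s α = ∑ r : Fin L,
      aDag M N L p ⟨α - 1, by omega⟩ r * aAny M N L p ⟨α, h2⟩ r := dif_pos ⟨h1, h2⟩

lemma Ep_mid (p : ℂ) (s : ℤ → ℂ) (hM : 1 ≤ M) (hN : 1 ≤ N) :
    Ep M N L p s M = ∑ r : Fin L,
      aDag M N L p ⟨M - 1, by omega⟩ r * AAny M N L p s ⟨0, by omega⟩ r := by
  have h : ¬ (1 ≤ M ∧ M < M) := by omega
  exact (dif_neg h).trans (dif_pos ⟨rfl, hM, hN⟩)

lemma Ep_high (p : ℂ) (s : ℤ → ℂ) {α : ℕ} (h1 : M < α) (h2 : α ≤ M + N - 1) :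
    Ep M N L p s α = ∑ r : Fin L,
      ADag M N L p s ⟨α - M - 1, by omega⟩ r * AAny M N L p s ⟨α - M, by omega⟩ r := by
  have ha : ¬ (1 ≤ α ∧ α < M) := by omega
  have hb : ¬ (α = M ∧ 1 ≤ M ∧ 1 ≤ N) := by omega
  rw [Ep, dif_neg ha, dif_neg hb, dif_pos (⟨h1, h2⟩ : M < α ∧ α ≤ M + N - 1)]

lemma Em_low (p : ℂ) (s : ℤ → ℂ) {α : ℕ} (h1 : 1 ≤ α) (h2 : α < M) :
    Em M N L p s α = ∑ r : Fin L,
      taDag M N L p ⟨α, h2⟩ r * taAny M N L p ⟨α - 1, by omega⟩ r := dif_pos ⟨h1, h2⟩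

lemma Em_mid (p : ℂ) (s : ℤ → ℂ) (hM : 1 ≤ M) (hN : 1 ≤ N) :
    Em M N L p s M = ∑ r : Fin L,
      tADag M N L p s ⟨0, by omega⟩ r * taAny M N L p ⟨M - 1, by omega⟩ r := by
  have h : ¬ (1 ≤ M ∧ M < M) := by omega
  exact (dif_neg h).trans (dif_pos ⟨rfl, hM, hN⟩)

lemma Em_high (p : ℂ) (s : ℤ → ℂ) {α : ℕ} (h1 : M < α) (h2 : α ≤ M + N - 1) :
    Em M N L p s α = ∑ r : Fin L,
      tADag M N L p s ⟨α - M, by omega⟩ r * tAAny M N L p s ⟨α - M - 1, by omega⟩ r := by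
  have ha : ¬ (1 ≤ α ∧ α < M) := by omega
  have hb : ¬ (α = M ∧ 1 ≤ M ∧ 1 ≤ N) := by omega
  rw [Em, dif_neg ha, dif_neg hb, dif_pos (⟨h1, h2⟩ : M < α ∧ α ≤ M + N - 1)]

lemma key (p : ℂ) (s : ℤ → ℂ) (hM : 1 ≤ M) (hN : 1 ≤ N) (α β : ℕ)
    (hα1 : 1 ≤ α) (hβ2 : β ≤ M + N - 1) (hab : α + 2 ≤ β) :
    Ep M N L p s α * Ep M N L p s β = Ep M N L p s β * Ep M N L p s α ∧
    Em M N L p s α * Em M N L p s β = Em M N L p s β * Em M N L p s α := by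
  have hβ1 : 1 ≤ β := by omega
  rcases lt_trichotomy β M with hβM | hβM | hβM
  · -- both fermionic
    have hαM : α < M := by omega
    constructor
    · rw [Ep_low p s hα1 hαM, Ep_low p s hβ1 hβM]
      refine sum_mul_sum_comm (R := Module.End ℂ (FS M N L)) _ _ _ _ (fun r r' => ?_)
      simp only [aDag, aAny]
      exact commFF p 1 (-1) 1 (-1) ⟨α - 1, by omega⟩ ⟨α, by omega⟩ ⟨β - 1, by omega⟩
        ⟨β, by omega⟩ r r' (by simp [Fin.ext_iff]; omega) (by simp [Fin.ext_iff]; omega)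
        (by simp [Fin.lt_def]; omega) (by simp [Fin.lt_def]; omega)
        (by simp [Fin.lt_def]; omega) (by simp [Fin.lt_def]; omega)
    · rw [Em_low p s hα1 hαM, Em_low p s hβ1 hβM]
      refine sum_mul_sum_comm (R := Module.End ℂ (FS M N L)) _ _ _ _ (fun r r' => ?_)
      simp only [taDag, taAny]
      exact commFF p (-1) 1 (-1) 1 ⟨α, by omega⟩ ⟨α - 1, by omega⟩ ⟨β, by omega⟩
        ⟨β - 1, by omega⟩ r r' (by simp [Fin.ext_iff]; omega) (by simp [Fin.ext_iff]; omega)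
        (by simp [Fin.lt_def]; omega) (by simp [Fin.lt_def]; omega)
        (by simp [Fin.lt_def]; omega) (by simp [Fin.lt_def]; omega)
  · -- β = M
    subst hβM
    have hαM : α < β := by omega
    constructor
    · rw [Ep_low p s hα1 hαM, Ep_mid p s hM hN]
      refine sum_mul_sum_comm (R := Module.End ℂ (FS β N L)) _ _ _ _ (fun r r' => ?_)
      simp only [aDag, aAny, AAny]
      exact commFX1 p s 1 (-1) 1 1 ⟨α - 1, by omega⟩ ⟨α, by omega⟩ ⟨β - 1, by omega⟩
        ⟨0, by omega⟩ r r' (by simp [Fin.ext_iff]; omega)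
        (by simp [Fin.lt_def]; omega) (by simp [Fin.lt_def]; omega)
    · rw [Em_low p s hα1 hαM, Em_mid p s hM hN]
      refine sum_mul_sum_comm (R := Module.End ℂ (FS β N L)) _ _ _ _ (fun r r' => ?_)
      simp only [taDag, taAny, tADag]
      exact commFX2 p s (-1) 1 1 1 ⟨α, by omega⟩ ⟨α - 1, by omega⟩ ⟨β - 1, by omega⟩
        ⟨0, by omega⟩ r r' (by simp [Fin.ext_iff]; omega)
        (by simp [Fin.lt_def]; omega) (by simp [Fin.lt_def]; omega)
  · rcases lt_trichotomy α M with hαM | hαM | hαM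
    · -- α fermionic, β bosonic
      constructor
      · rw [Ep_low p s hα1 hαM, Ep_high p s hβM hβ2]
        refine sum_mul_sum_comm (R := Module.End ℂ (FS M N L)) _ _ _ _ (fun r r' => ?_)
        simp only [aDag, aAny, ADag, AAny]
        exact commFB p s 1 (-1) (-1) 1 ⟨α - 1, by omega⟩ ⟨α, by omega⟩
          ⟨β - M - 1, by omega⟩ ⟨β - M, by omega⟩ r r'
          (by simp [Fin.ext_iff]; omega) (by simp [Fin.ext_iff]; omega)
      · rw [Em_low p s hα1 hαM, Em_high p s hβM hβ2]
        refine sum_mul_sum_comm (R := Module.End ℂ (FS M N L)) _ _ _ _ (fun r r' => ?_)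
        simp only [taDag, taAny, tADag, tAAny]
        exact commFB p s (-1) 1 1 (-1) ⟨α, by omega⟩ ⟨α - 1, by omega⟩
          ⟨β - M, by omega⟩ ⟨β - M - 1, by omega⟩ r r'
          (by simp [Fin.ext_iff]; omega) (by simp [Fin.ext_iff]; omega)
    · -- α = M mixed
      subst hαM
      constructor
      · rw [Ep_mid p s hM hN, Ep_high p s hβM hβ2]
        refine sum_mul_sum_comm (R := Module.End ℂ (FS α N L)) _ _ _ _ (fun r r' => ?_)
        simp only [aDag, AAny, ADag]
        exact commX1B p s 1 1 (-1) 1 ⟨α - 1, by omega⟩ ⟨0, by omega⟩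
          ⟨β - α - 1, by omega⟩ ⟨β - α, by omega⟩ r r'
          (by simp [Fin.ext_iff]; omega) (by simp [Fin.ext_iff]; omega)
          (by simp [Fin.ext_iff]; omega)
      · rw [Em_mid p s hM hN, Em_high p s hβM hβ2]
        refine sum_mul_sum_comm (R := Module.End ℂ (FS α N L)) _ _ _ _ (fun r r' => ?_)
        simp only [taDag, taAny, tADag, tAAny]
        exact commX2B p s 1 1 1 (-1) ⟨α - 1, by omega⟩ ⟨0, by omega⟩
          ⟨β - α, by omega⟩ ⟨β - α - 1, by omega⟩ r r'
          (by simp [Fin.ext_iff]; omega) (by simp [Fin.ext_iff]; omega)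
          (by simp [Fin.ext_iff]; omega)
    · -- both bosonic
      have hα2 : α ≤ M + N - 1 := by omega
      constructor
      · rw [Ep_high p s hαM hα2, Ep_high p s hβM hβ2]
        refine sum_mul_sum_comm (R := Module.End ℂ (FS M N L)) _ _ _ _ (fun r r' => ?_)
        simp only [ADag, AAny]
        exact commBB p s (-1) 1 (-1) 1 ⟨α - M - 1, by omega⟩ ⟨α - M, by omega⟩
          ⟨β - M - 1, by omega⟩ ⟨β - M, by omega⟩ r r'
          (by simp [Fin.ext_iff]; omega) (by simp [Fin.ext_iff]; omega)
          (by simp [Fin.ext_iff]; omega) (by simp [Fin.ext_iff]; omega)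
          (by simp [Fin.ext_iff]; omega) (by simp [Fin.ext_iff]; omega)
      · rw [Em_high p s hαM hα2, Em_high p s hβM hβ2]
        refine sum_mul_sum_comm (R := Module.End ℂ (FS M N L)) _ _ _ _ (fun r r' => ?_)
        simp only [tADag, tAAny]
        exact commBB p s 1 (-1) 1 (-1) ⟨α - M, by omega⟩ ⟨α - M - 1, by omega⟩
          ⟨β - M, by omega⟩ ⟨β - M - 1, by omega⟩ r r'
          (by simp [Fin.ext_iff]; omega) (by simp [Fin.ext_iff]; omega)
          (by simp [Fin.ext_iff]; omega) (by simp [Fin.ext_iff]; omega)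
          (by simp [Fin.ext_iff]; omega) (by simp [Fin.ext_iff]; omega)

/-- anyonic generators attached to non-adjacent simple roots commute. -/
theorem anyonic_nonadjacent_commute
    (M N L : ℕ) (hM : 1 ≤ M) (hN : 1 ≤ N) (hMN : 3 ≤ M + N) (hL : 1 ≤ L)
    (p : ℂ) (hp : p ≠ 0) (hp4 : p ^ 4 ≠ 1) (q : ℂ) (hq : q = p ^ 2)
    (s : ℤ → ℂ) (hs : ∀ n : ℤ, s n ^ 2 = qInt q n) :
    ∀ α β : ℕ, 1 ≤ α → α ≤ M + N - 1 → 1 ≤ β → β ≤ M + N - 1 →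
      (α + 2 ≤ β ∨ β + 2 ≤ α) →
      Ep M N L p s α * Ep M N L p s β = Ep M N L p s β * Ep M N L p s α ∧
      Em M N L p s α * Em M N L p s β = Em M N L p s β * Em M N L p s α := by
  intro α β hα1 hα2 hβ1 hβ2 hne
  rcases hne with h | h
  · exact key p s hM hN α β hα1 hβ2 h
  · obtain ⟨h1, h2⟩ := key p s hM hN β α hβ1 hα2 h
    exact ⟨h1.symm, h2.symm⟩

end
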